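/- Let p and q be distinct odd primes with q > p and q > 2p - 1. Then the fault-tolerant metric dimension of the barycentric subdivision of the zero divisor graph of Z_{pq} equals q - 1, i.e. fdim(BS(Γ(Z_{pq}))) = q - 1. -/

import Mathlib

open SimpleGraph

/-- Vertices of the zero divisor graph of `ZMod n`: nonzero zero divisors. -/
def ZDVertex (n : ℕ) : Type :=
  {x : ZMod n // x ≠ 0 ∧ ∃ y : ZMod n, y ≠ 0 ∧ x * y = 0}

/-- The zero divisor graph of `ZMod n`. -/
def zdGraph (n : ℕ) : SimpleGraph (ZDVertex n) where
  Adj a b := a ≠ b ∧ a.1 * b.1 = 0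
  symm := by
    constructor
    rintro a b ⟨hne, h⟩
    exact ⟨hne.symm, by rwa [mul_comm]⟩
  loopless := by
    constructor
    rintro a ⟨hne, -⟩
    exact hne rfl

/-- Vertex type of the barycentric subdivision: original vertices plus one
vertex for each edge. -/
def BSVertex {V : Type*} (G : SimpleGraph V) : Type _ := V ⊕ G.edgeSet

/-- The barycentric subdivision of a simple graph: each edge `uv` is replaced
by a path `u – w_{uv} – v` through the new vertex corresponding to the edge. -/
def BS {V : Type*} (G : SimpleGraph V) : SimpleGraph (BSVertex G) where
  Adj x y :=
    (∃ (v : V) (e : G.edgeSet), x = Sum.inl v ∧ y = Sum.inr e ∧ v ∈ (e : Sym2 V)) ∨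
    (∃ (v : V) (e : G.edgeSet), x = Sum.inr e ∧ y = Sum.inl v ∧ v ∈ (e : Sym2 V))
  symm := by
    constructor
    rintro x y (⟨v, e, rfl, rfl, h⟩ | ⟨v, e, rfl, rfl, h⟩)
    · exact Or.inr ⟨v, e, rfl, rfl, h⟩
    · exact Or.inl ⟨v, e, rfl, rfl, h⟩
  loopless := by
    constructor
    rintro x (⟨v, e, rfl, h, -⟩ | ⟨v, e, rfl, h, -⟩) <;> simp at h

/-- `W` is a resolving set for `G`. -/
def IsResolving {V : Type*} (G : SimpleGraph V) (W : Set V) : Prop :=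
  ∀ x y : V, x ≠ y → ∃ w ∈ W, G.dist x w ≠ G.dist y w

/-- The metric dimension of `G`: minimum cardinality of a resolving set. -/
noncomputable def metricDim {V : Type*} (G : SimpleGraph V) : ℕ :=
  sInf {k : ℕ | ∃ W : Set V, IsResolving G W ∧ W.ncard = k}

/-- `W` is a metric basis of `G`: a resolving set of minimum cardinality. -/
def IsMetricBasis {V : Type*} (G : SimpleGraph V) (W : Set V) : Prop :=
  IsResolving G W ∧ W.ncard = metricDim G

/-- `W` is a fault-tolerant resolving set for `G`. -/
def IsFTResolving {V : Type*} (G : SimpleGraph V) (W : Set V) : Prop :=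
  IsResolving G W ∧ ∀ w ∈ W, IsResolving G (W \ {w})

/-- The fault-tolerant metric dimension of `G`. -/
noncomputable def ftMetricDim {V : Type*} (G : SimpleGraph V) : ℕ :=
  sInf {k : ℕ | ∃ W : Set V, IsFTResolving G W ∧ W.ncard = k}

/-- The set `U` of original vertices of `Γ(Z_{pq})`, viewed inside the
barycentric subdivision, that are nonzero multiples of `q` in `Z_{pq}`. -/
def USet (p q : ℕ) : Set (BSVertex (zdGraph (p * q))) :=
  {x | ∃ v : ZDVertex (p * q), x = Sum.inl v ∧
      ∃ k : ZMod (p * q), v.1 = (q : ZMod (p * q)) * k}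

/-- The set `A` of original vertices of `Γ(Z_{pq})`, viewed inside the
barycentric subdivision, that are nonzero multiples of `p` in `Z_{pq}`. -/
def ASet (p q : ℕ) : Set (BSVertex (zdGraph (p * q))) :=
  {x | ∃ v : ZDVertex (p * q), x = Sum.inl v ∧
      ∃ k : ZMod (p * q), v.1 = (p : ZMod (p * q)) * k}
variable {V : Type*} {G : SimpleGraph V}

lemma BS_adj_inl_inr {v : V} {e : G.edgeSet} :
    (BS G).Adj (Sum.inl v) (Sum.inr e) ↔ v ∈ (e : Sym2 V) := by
  constructor
  · rintro (⟨v', e', h1, h2, h3⟩ | ⟨v', e', h1, h2, h3⟩)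
    · cases h1; cases h2; exact h3
    · exact absurd h1 (by simp)
  · intro h; exact Or.inl ⟨v, e, rfl, rfl, h⟩

lemma BS_adj_inr_inl {v : V} {e : G.edgeSet} :
    (BS G).Adj (Sum.inr e) (Sum.inl v) ↔ v ∈ (e : Sym2 V) := by
  exact ⟨fun h => BS_adj_inl_inr.1 h.symm, fun h => (BS_adj_inl_inr.2 h).symm⟩

lemma BS_not_adj_inl_inl {u v : V} : ¬ (BS G).Adj (Sum.inl u) (Sum.inl v) := by
  rintro (⟨v', e', h1, h2, h3⟩ | ⟨v', e', h1, h2, h3⟩) <;> simp at h1 h2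

lemma BS_not_adj_inr_inr {e f : G.edgeSet} : ¬ (BS G).Adj (Sum.inr e) (Sum.inr f) := by
  rintro (⟨v', e', h1, h2, h3⟩ | ⟨v', e', h1, h2, h3⟩) <;> simp at h1 h2

def bsPar : BSVertex G → Bool := Sum.elim (fun _ => false) (fun _ => true)

lemma bsPar_ne_of_adj {x y : BSVertex G} (h : (BS G).Adj x y) : bsPar x ≠ bsPar y := by
  rcases h with ⟨v, e, rfl, rfl, -⟩ | ⟨v, e, rfl, rfl, -⟩ <;> simp [bsPar]

lemma walk_parity {x y : BSVertex G} (w : (BS G).Walk x y) :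
    (bsPar x = bsPar y) ↔ Even w.length := by
  induction w with
  | nil => simp
  | @cons a b c hab w ih =>
    have hne := bsPar_ne_of_adj hab
    rw [SimpleGraph.Walk.length_cons, Nat.even_add_one, ← ih]
    revert hne
    cases bsPar a <;> cases bsPar b <;> cases bsPar c <;> simp

lemma even_dist_of_par_eq {x y : BSVertex G} (h : bsPar x = bsPar y) :
    Even ((BS G).dist x y) := by
  by_cases hd : (BS G).dist x y = 0
  · simp [hd]
  · obtain ⟨w, hw⟩ := SimpleGraph.exists_walk_of_dist_ne_zero hd
    rw [← hw]; exact (walk_parity w).mp h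

lemma odd_dist_of_par_ne {x y : BSVertex G} (hr : (BS G).Reachable x y)
    (h : bsPar x ≠ bsPar y) : Odd ((BS G).dist x y) := by
  obtain ⟨w, hw⟩ := hr.exists_walk_length_eq_dist
  rw [← hw, ← Nat.not_even_iff_odd, ← walk_parity w]
  exact h

lemma exists_mid_of_dist_two {W : Type*} {H : SimpleGraph W} {x y : W}
    (h : H.dist x y = 2) : ∃ z, H.Adj x z ∧ H.Adj z y := by
  obtain ⟨w, hw⟩ := SimpleGraph.exists_walk_of_dist_ne_zero (by rw [h]; omega)
  rw [h] at hw
  cases w with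
  | nil => simp at hw
  | cons hxz w' =>
    cases w' with
    | nil => simp at hw
    | cons hzz' w'' =>
      cases w'' with
      | nil => exact ⟨_, hxz, hzz'⟩
      | cons h3 w3 => simp [SimpleGraph.Walk.length_cons] at hw

section CB

variable (PA : V → Prop)

/-- complete bipartite structure -/
def CBhyp (G : SimpleGraph V) (PA : V → Prop) : Prop :=
  ∀ u v, G.Adj u v ↔ ((PA u ∧ ¬ PA v) ∨ (¬ PA u ∧ PA v))

variable {PA} (hcb : CBhyp G PA)
include hcb

lemma edge_exists (e : G.edgeSet) :
    ∃ a b, PA a ∧ ¬ PA b ∧ (e : Sym2 V) = s(a, b) := by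
  obtain ⟨e, he⟩ := e
  induction e using Sym2.ind with
  | _ u v =>
    rw [SimpleGraph.mem_edgeSet] at he
    rcases (hcb u v).1 he with ⟨h1, h2⟩ | ⟨h1, h2⟩
    · exact ⟨u, v, h1, h2, rfl⟩
    · exact ⟨v, u, h2, h1, Sym2.eq_swap.symm⟩

noncomputable def eA (e : G.edgeSet) : V := (edge_exists hcb e).choose

noncomputable def eB (e : G.edgeSet) : V :=
  (edge_exists hcb e).choose_spec.choose

lemma eA_PA (e : G.edgeSet) : PA (eA hcb e) :=
  (edge_exists hcb e).choose_spec.choose_spec.1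

lemma eB_nPA (e : G.edgeSet) : ¬ PA (eB hcb e) :=
  (edge_exists hcb e).choose_spec.choose_spec.2.1

lemma edge_eq (e : G.edgeSet) : (e : Sym2 V) = s(eA hcb e, eB hcb e) :=
  (edge_exists hcb e).choose_spec.choose_spec.2.2

lemma mem_edge_iff {v : V} {e : G.edgeSet} :
    v ∈ (e : Sym2 V) ↔ v = eA hcb e ∨ v = eB hcb e := by
  rw [edge_eq hcb e]; exact Sym2.mem_iff

lemma eA_mem (e : G.edgeSet) : eA hcb e ∈ (e : Sym2 V) :=
  (mem_edge_iff hcb).2 (Or.inl rfl)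

lemma eB_mem (e : G.edgeSet) : eB hcb e ∈ (e : Sym2 V) :=
  (mem_edge_iff hcb).2 (Or.inr rfl)

lemma eq_eA_of_mem {v : V} {e : G.edgeSet} (hv : v ∈ (e : Sym2 V)) (hPA : PA v) :
    v = eA hcb e := by
  rcases (mem_edge_iff hcb).1 hv with h | h
  · exact h
  · exact absurd (h ▸ hPA) (eB_nPA hcb e)

lemma eq_eB_of_mem {v : V} {e : G.edgeSet} (hv : v ∈ (e : Sym2 V)) (hPA : ¬ PA v) :
    v = eB hcb e := by
  rcases (mem_edge_iff hcb).1 hv with h | h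
  · exact absurd (h ▸ hPA) (fun hn => hn (eA_PA hcb e))
  · exact h

lemma adj_of_PA {a b : V} (ha : PA a) (hb : ¬ PA b) : G.Adj a b :=
  (hcb a b).2 (Or.inl ⟨ha, hb⟩)

end CB

open Classical in
/-- total edge-making function with fallback -/
noncomputable def mkE (G : SimpleGraph V) (e₀ : G.edgeSet) (a b : V) : G.edgeSet :=
  if h : G.Adj a b then ⟨s(a, b), h⟩ else e₀

lemma mkE_coe {e₀ : G.edgeSet} {a b : V} (h : G.Adj a b) :
    (mkE G e₀ a b : Sym2 V) = s(a, b) := by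
  classical
  rw [mkE]
  rw [dif_pos h]

open Classical in
noncomputable def DF (G : SimpleGraph V) (PA : V → Prop) :
    BSVertex G → BSVertex G → ℕ
  | Sum.inl u, Sum.inl v => if u = v then 0 else if (PA u ↔ PA v) then 4 else 2
  | Sum.inl v, Sum.inr e => if v ∈ (e : Sym2 V) then 1 else 3
  | Sum.inr e, Sum.inl v => if v ∈ (e : Sym2 V) then 1 else 3
  | Sum.inr e, Sum.inr f =>
      if e = f then 0 else if (∃ z, z ∈ (e : Sym2 V) ∧ z ∈ (f : Sym2 V)) then 2 else 4

lemma mem_mk_left {a b : V} (h : G.Adj a b) :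
    a ∈ ((⟨s(a, b), h⟩ : G.edgeSet) : Sym2 V) := by simp

lemma mem_mk_right {a b : V} (h : G.Adj a b) :
    b ∈ ((⟨s(a, b), h⟩ : G.edgeSet) : Sym2 V) := by simp

section Dist

variable {PA : V → Prop} (hcb : CBhyp G PA)

lemma dist_inl_inr_mem {v : V} {e : G.edgeSet} (h : v ∈ (e : Sym2 V)) :
    (BS G).dist (Sum.inl v) (Sum.inr e) = 1 :=
  SimpleGraph.dist_eq_one_iff_adj.2 (BS_adj_inl_inr.2 h)

include hcb

lemma no_common_inl_inl {u v : V} (huv : u ≠ v) (h : PA u ↔ PA v) {z : BSVertex G}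
    (h1 : (BS G).Adj (Sum.inl u) z) (h2 : (BS G).Adj z (Sum.inl v)) : False := by
  cases z with
  | inl w => exact BS_not_adj_inl_inl h1
  | inr e =>
    have hu : u ∈ (e : Sym2 V) := BS_adj_inl_inr.1 h1
    have hv : v ∈ (e : Sym2 V) := BS_adj_inr_inl.1 h2
    by_cases hP : PA u
    · exact huv ((eq_eA_of_mem hcb hu hP).trans (eq_eA_of_mem hcb hv (h.1 hP)).symm)
    · exact huv ((eq_eB_of_mem hcb hu hP).trans
        (eq_eB_of_mem hcb hv (fun hc => hP (h.2 hc))).symm)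

lemma dist_inl_inl_op {u v : V} (hu : PA u) (hv : ¬ PA v) :
    (BS G).dist (Sum.inl u) (Sum.inl v) = 2 := by
  have hadj := adj_of_PA hcb hu hv
  have w : (BS G).Walk (Sum.inl u) (Sum.inl v) :=
    SimpleGraph.Walk.cons (BS_adj_inl_inr.2 (mem_mk_left hadj))
      (SimpleGraph.Walk.cons (BS_adj_inr_inl.2 (mem_mk_right hadj)) SimpleGraph.Walk.nil)
  have hle : (BS G).dist (Sum.inl u) (Sum.inl v) ≤ 2 := by
    have := SimpleGraph.dist_le
      (SimpleGraph.Walk.cons (BS_adj_inl_inr.2 (mem_mk_left hadj))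
        (SimpleGraph.Walk.cons (BS_adj_inr_inl.2 (mem_mk_right hadj)) SimpleGraph.Walk.nil))
    exact this
  have hne : (Sum.inl u : BSVertex G) ≠ Sum.inl v := by
    simp only [ne_eq, Sum.inl.injEq]; rintro rfl; exact hv hu
  have hpos := (w.reachable).pos_dist_of_ne hne
  have hnot1 : (BS G).dist (Sum.inl u) (Sum.inl v) ≠ 1 := by
    intro hc
    exact BS_not_adj_inl_inl (SimpleGraph.dist_eq_one_iff_adj.1 hc)
  omega

lemma dist_inl_inl_same {u v b : V} (huv : u ≠ v) (hP : PA u ↔ PA v)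
    (hub : G.Adj u b) (hvb : G.Adj v b) :
    (BS G).dist (Sum.inl u) (Sum.inl v) = 4 := by
  have w : (BS G).Walk (Sum.inl u) (Sum.inl v) :=
    SimpleGraph.Walk.cons (BS_adj_inl_inr.2 (mem_mk_left hub))
      (SimpleGraph.Walk.cons (BS_adj_inr_inl.2 (mem_mk_right hub))
        (SimpleGraph.Walk.cons (BS_adj_inl_inr.2 (mem_mk_right hvb))
          (SimpleGraph.Walk.cons (BS_adj_inr_inl.2 (mem_mk_left hvb))
            SimpleGraph.Walk.nil)))
  have hle : (BS G).dist (Sum.inl u) (Sum.inl v) ≤ 4 := by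
    have := SimpleGraph.dist_le
      (SimpleGraph.Walk.cons (BS_adj_inl_inr.2 (mem_mk_left hub))
        (SimpleGraph.Walk.cons (BS_adj_inr_inl.2 (mem_mk_right hub))
          (SimpleGraph.Walk.cons (BS_adj_inl_inr.2 (mem_mk_right hvb))
            (SimpleGraph.Walk.cons (BS_adj_inr_inl.2 (mem_mk_left hvb))
              SimpleGraph.Walk.nil))))
    exact this
  have hne : (Sum.inl u : BSVertex G) ≠ Sum.inl v := by simpa using huv
  have hpos := (w.reachable).pos_dist_of_ne hne
  have heven : Even ((BS G).dist (Sum.inl u) (Sum.inl v)) :=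
    even_dist_of_par_eq rfl
  have hnot2 : (BS G).dist (Sum.inl u) (Sum.inl v) ≠ 2 := by
    intro hc
    obtain ⟨z, hz1, hz2⟩ := exists_mid_of_dist_two hc
    exact no_common_inl_inl hcb huv hP hz1 hz2
  obtain ⟨k, hk⟩ := heven
  omega

lemma dist_inl_inr_not_mem {v : V} {e : G.edgeSet} (h : v ∉ (e : Sym2 V)) :
    (BS G).dist (Sum.inl v) (Sum.inr e) = 3 := by
  have key : ∃ z, z ∈ (e : Sym2 V) ∧ G.Adj v z := by
    by_cases hP : PA v
    · exact ⟨eB hcb e, eB_mem hcb e, adj_of_PA hcb hP (eB_nPA hcb e)⟩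
    · exact ⟨eA hcb e, eA_mem hcb e, (hcb v _).2 (Or.inr ⟨hP, eA_PA hcb e⟩)⟩
  obtain ⟨z, hze, hvz⟩ := key
  have w : (BS G).Walk (Sum.inl v) (Sum.inr e) :=
    SimpleGraph.Walk.cons (BS_adj_inl_inr.2 (mem_mk_left hvz))
      (SimpleGraph.Walk.cons (BS_adj_inr_inl.2 (mem_mk_right hvz))
        (SimpleGraph.Walk.cons (BS_adj_inl_inr.2 hze) SimpleGraph.Walk.nil))
  have hle : (BS G).dist (Sum.inl v) (Sum.inr e) ≤ 3 := by
    have := SimpleGraph.dist_le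
      (SimpleGraph.Walk.cons (BS_adj_inl_inr.2 (mem_mk_left hvz))
        (SimpleGraph.Walk.cons (BS_adj_inr_inl.2 (mem_mk_right hvz))
          (SimpleGraph.Walk.cons (BS_adj_inl_inr.2 hze) SimpleGraph.Walk.nil)))
    exact this
  have hodd : Odd ((BS G).dist (Sum.inl v) (Sum.inr e)) :=
    odd_dist_of_par_ne w.reachable (by simp [bsPar])
  have hnot1 : (BS G).dist (Sum.inl v) (Sum.inr e) ≠ 1 := by
    intro hc
    exact h (BS_adj_inl_inr.1 (SimpleGraph.dist_eq_one_iff_adj.1 hc))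
  obtain ⟨k, hk⟩ := hodd
  omega

omit hcb in
lemma dist_inr_inr_share {e f : G.edgeSet} (hef : e ≠ f) {z : V}
    (hze : z ∈ (e : Sym2 V)) (hzf : z ∈ (f : Sym2 V)) :
    (BS G).dist (Sum.inr e) (Sum.inr f) = 2 := by
  have w : (BS G).Walk (Sum.inr e) (Sum.inr f) :=
    SimpleGraph.Walk.cons (BS_adj_inr_inl.2 hze)
      (SimpleGraph.Walk.cons (BS_adj_inl_inr.2 hzf) SimpleGraph.Walk.nil)
  have hle : (BS G).dist (Sum.inr e) (Sum.inr f) ≤ 2 := by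
    have := SimpleGraph.dist_le
      (SimpleGraph.Walk.cons (BS_adj_inr_inl.2 hze)
        (SimpleGraph.Walk.cons (BS_adj_inl_inr.2 hzf) SimpleGraph.Walk.nil))
    exact this
  have hne : (Sum.inr e : BSVertex G) ≠ Sum.inr f := by simpa using hef
  have hpos := (w.reachable).pos_dist_of_ne hne
  have hnot1 : (BS G).dist (Sum.inr e) (Sum.inr f) ≠ 1 := by
    intro hc
    exact BS_not_adj_inr_inr (SimpleGraph.dist_eq_one_iff_adj.1 hc)
  omega

lemma dist_inr_inr_noshare {e f : G.edgeSet}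
    (h : ¬ ∃ z, z ∈ (e : Sym2 V) ∧ z ∈ (f : Sym2 V)) :
    (BS G).dist (Sum.inr e) (Sum.inr f) = 4 := by
  have hef : e ≠ f := by
    rintro rfl; exact h ⟨eA hcb e, eA_mem hcb e, eA_mem hcb e⟩
  have hadj : G.Adj (eA hcb e) (eB hcb f) := adj_of_PA hcb (eA_PA hcb e) (eB_nPA hcb f)
  have w : (BS G).Walk (Sum.inr e) (Sum.inr f) :=
    SimpleGraph.Walk.cons (BS_adj_inr_inl.2 (eA_mem hcb e))
      (SimpleGraph.Walk.cons (BS_adj_inl_inr.2 (mem_mk_left hadj))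
        (SimpleGraph.Walk.cons (BS_adj_inr_inl.2 (mem_mk_right hadj))
          (SimpleGraph.Walk.cons (BS_adj_inl_inr.2 (eB_mem hcb f))
            SimpleGraph.Walk.nil)))
  have hle : (BS G).dist (Sum.inr e) (Sum.inr f) ≤ 4 := by
    have := SimpleGraph.dist_le
      (SimpleGraph.Walk.cons (BS_adj_inr_inl.2 (eA_mem hcb e))
        (SimpleGraph.Walk.cons (BS_adj_inl_inr.2 (mem_mk_left hadj))
          (SimpleGraph.Walk.cons (BS_adj_inr_inl.2 (mem_mk_right hadj))
            (SimpleGraph.Walk.cons (BS_adj_inl_inr.2 (eB_mem hcb f))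
              SimpleGraph.Walk.nil))))
    exact this
  have hne : (Sum.inr e : BSVertex G) ≠ Sum.inr f := by simpa using hef
  have hpos := (w.reachable).pos_dist_of_ne hne
  have heven : Even ((BS G).dist (Sum.inr e) (Sum.inr f)) :=
    even_dist_of_par_eq rfl
  have hnot2 : (BS G).dist (Sum.inr e) (Sum.inr f) ≠ 2 := by
    intro hc
    obtain ⟨z, hz1, hz2⟩ := exists_mid_of_dist_two hc
    cases z with
    | inr g => exact BS_not_adj_inr_inr hz1
    | inl v => exact h ⟨v, BS_adj_inr_inl.1 hz1, BS_adj_inl_inr.1 hz2⟩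
  obtain ⟨k, hk⟩ := heven
  omega

lemma dist_eq_DF (ha : ∃ a, PA a) (hb : ∃ b, ¬ PA b) :
    ∀ x y : BSVertex G, (BS G).dist x y = DF G PA x y := by
  intro x y
  cases x with
  | inl u =>
    cases y with
    | inl v =>
      by_cases huv : u = v
      · subst huv; simp [DF, SimpleGraph.dist_self]; exact SimpleGraph.dist_self
      · by_cases hP : PA u ↔ PA v
        · simp only [DF, if_neg huv, if_pos hP]
          rcases Classical.em (PA u) with h | h
          · obtain ⟨b, hb'⟩ := hb
            exact dist_inl_inl_same hcb huv hP (adj_of_PA hcb h hb')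
              (adj_of_PA hcb (hP.1 h) hb')
          · obtain ⟨a, ha'⟩ := ha
            exact dist_inl_inl_same hcb huv hP
              ((hcb u a).2 (Or.inr ⟨h, ha'⟩))
              ((hcb v a).2 (Or.inr ⟨fun hc => h (hP.2 hc), ha'⟩))
        · simp only [DF, if_neg huv, if_neg hP]
          rcases Classical.em (PA u) with h | h
          · refine dist_inl_inl_op hcb h ?_
            intro hv; exact hP (Iff.intro (fun _ => hv) (fun _ => h))
          · refine SimpleGraph.dist_comm.trans ?_
            refine dist_inl_inl_op hcb ?_ h
            by_contra hc
            exact hP (Iff.intro (fun hu => absurd hu h) (fun hv => absurd hv hc))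
    | inr e =>
      by_cases hm : u ∈ (e : Sym2 V)
      · simp only [DF, if_pos hm]; exact dist_inl_inr_mem hm
      · simp only [DF, if_neg hm]; exact dist_inl_inr_not_mem hcb hm
  | inr e =>
    cases y with
    | inl v =>
      refine SimpleGraph.dist_comm.trans ?_
      by_cases hm : v ∈ (e : Sym2 V)
      · simp only [DF, if_pos hm]; exact dist_inl_inr_mem hm
      · simp only [DF, if_neg hm]; exact dist_inl_inr_not_mem hcb hm
    | inr f =>
      by_cases hef : e = f
      · subst hef; simp [DF, SimpleGraph.dist_self]; exact SimpleGraph.dist_self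
      · by_cases hsh : ∃ z, z ∈ (e : Sym2 V) ∧ z ∈ (f : Sym2 V)
        · simp only [DF, if_neg hef, if_pos hsh]
          obtain ⟨z, hz1, hz2⟩ := hsh
          exact dist_inr_inr_share hef hz1 hz2
        · simp only [DF, if_neg hef, if_neg hsh]
          exact dist_inr_inr_noshare hcb hsh

end Dist


instance finite_BSVertex [Finite V] : Finite (BSVertex G) := by
  have h1 : Finite (Sym2 V) :=
    Finite.of_surjective (fun p : V × V => s(p.1, p.2))
      (fun z => by induction z using Sym2.ind with | _ x y => exact ⟨(x, y), rfl⟩)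
  have h2 : Finite (G.edgeSet) := Subtype.finite
  exact show Finite (V ⊕ G.edgeSet) from inferInstance

section Lower

variable {PA : V → Prop} (hcb : CBhyp G PA)

def SaSet (G : SimpleGraph V) (a : V) : Set (BSVertex G) :=
  {Sum.inl a} ∪ {x | ∃ e : G.edgeSet, x = Sum.inr e ∧ a ∈ (e : Sym2 V)}

include hcb

lemma SaSet_disj {a a' : V} (ha : PA a) (ha' : PA a') (hne : a ≠ a')
    {x : BSVertex G} (hx : x ∈ SaSet G a) (hx' : x ∈ SaSet G a') : False := by
  rcases hx with hx | ⟨e, rfl, hae⟩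
  · rcases hx' with hx' | ⟨e, he, _⟩
    · replace hx : x = Sum.inl a := hx; replace hx' : x = Sum.inl a' := hx'
      exact hne (Sum.inl.inj (hx.symm.trans hx'))
    · replace hx : x = Sum.inl a := hx
      exact Sum.inl_ne_inr (hx.symm.trans he)
  · rcases hx' with hx' | ⟨e', he', ha'e⟩
    · replace hx' : (Sum.inr e : BSVertex G) = Sum.inl a' := hx'
      exact Sum.inr_ne_inl hx'
    · have hee' : e = e' := Sum.inr.inj he'
      subst hee'
      exact hne ((eq_eA_of_mem hcb hae ha).trans (eq_eA_of_mem hcb ha'e ha').symm)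

lemma distinguisher_mem {a a' : V} (ha : PA a) (ha' : PA a') (hne : a ≠ a')
    {w : BSVertex G} (hw : DF G PA (Sum.inl a) w ≠ DF G PA (Sum.inl a') w) :
    w ∈ SaSet G a ∪ SaSet G a' := by
  cases w with
  | inl u =>
    by_cases h1 : a = u
    · exact Or.inl (Or.inl (by subst h1; exact Set.mem_singleton _))
    · by_cases h2 : a' = u
      · exact Or.inr (Or.inl (by subst h2; exact Set.mem_singleton _))
      · exfalso
        apply hw
        simp only [DF, if_neg h1, if_neg h2]
        have : (PA a ↔ PA u) ↔ (PA a' ↔ PA u) := by tauto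
        by_cases h3 : PA a ↔ PA u
        · rw [if_pos h3, if_pos (this.1 h3)]
        · rw [if_neg h3, if_neg (fun hc => h3 (this.2 hc))]
  | inr e =>
    by_cases h1 : a ∈ (e : Sym2 V)
    · exact Or.inl (Or.inr ⟨e, rfl, h1⟩)
    · by_cases h2 : a' ∈ (e : Sym2 V)
      · exact Or.inr (Or.inr ⟨e, rfl, h2⟩)
      · exact absurd (by simp [DF, if_neg h1, if_neg h2]) hw

omit hcb in
lemma two_distinguishers {W : Set (BSVertex G)} (hW : IsFTResolving (BS G) W)
    {x y : BSVertex G} (hxy : x ≠ y) :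
    ∃ w₁ ∈ W, ∃ w₂ ∈ W, w₁ ≠ w₂ ∧
      (BS G).dist x w₁ ≠ (BS G).dist y w₁ ∧ (BS G).dist x w₂ ≠ (BS G).dist y w₂ := by
  obtain ⟨w₁, hw₁W, hw₁⟩ := hW.1 x y hxy
  obtain ⟨w₂, hw₂W, hw₂⟩ := hW.2 w₁ hw₁W x y hxy
  refine ⟨w₁, hw₁W, w₂, hw₂W.1, ?_, hw₁, hw₂⟩
  intro hc
  exact hw₂W.2 (by simp [← hc])

lemma FT_lower [Finite V] (ha : ∃ a, PA a) (hb : ∃ b, ¬ PA b)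
    (h2 : 1 < {v | PA v}.ncard)
    {W : Set (BSVertex G)} (hW : IsFTResolving (BS G) W) :
    {v | PA v}.ncard ≤ W.ncard := by
  classical
  have hDF := dist_eq_DF hcb ha hb
  have key : ∀ a a', PA a → PA a' → a ≠ a' →
      ∃ w₁ ∈ W ∩ (SaSet G a ∪ SaSet G a'),
        ∃ w₂ ∈ W ∩ (SaSet G a ∪ SaSet G a'), w₁ ≠ w₂ := by
    intro a a' hPa hPa' hne
    obtain ⟨w₁, h1W, w₂, h2W, h12, hd1, hd2⟩ :=
      two_distinguishers hW (x := Sum.inl a) (y := Sum.inl a') (fun hc => hne (Sum.inl.inj hc))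
    replace hd1 : DF G PA (Sum.inl a) w₁ ≠ DF G PA (Sum.inl a') w₁ :=
      fun hc => hd1 ((hDF _ _).trans (hc.trans (hDF _ _).symm))
    replace hd2 : DF G PA (Sum.inl a) w₂ ≠ DF G PA (Sum.inl a') w₂ :=
      fun hc => hd2 ((hDF _ _).trans (hc.trans (hDF _ _).symm))
    exact ⟨w₁, ⟨h1W, distinguisher_mem hcb hPa hPa' hne hd1⟩,
      w₂, ⟨h2W, distinguisher_mem hcb hPa hPa' hne hd2⟩, h12⟩
  have hnonempty : Nonempty (BSVertex G) := ⟨Sum.inl ha.choose⟩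
  by_cases hall : ∀ a ∈ {v | PA v}, (W ∩ SaSet G a).Nonempty
  · choose! f hf using hall
    refine Set.ncard_le_ncard_of_injOn f (fun a haA => (hf a haA).1) ?_ (Set.toFinite W)
    intro a haA a' ha'A hfe
    by_contra hne
    exact SaSet_disj hcb haA ha'A hne (hf a haA).2 (hfe ▸ (hf a' ha'A).2)
  · push_neg at hall
    obtain ⟨a₀, ha₀A, hempty⟩ := hall
    have hWSa : ∀ a, PA a → a ≠ a₀ → ∀ w ∈ W, w ∈ SaSet G a ∪ SaSet G a₀ → w ∈ SaSet G a := by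
      intro a hPa hne w hwW hw
      rcases hw with hw | hw
      · exact hw
      · exact absurd (Set.mem_inter hwW hw) (by simp [hempty])
    have htwo : ∀ a, PA a → a ≠ a₀ →
        ∃ w₁ ∈ W ∩ SaSet G a, ∃ w₂ ∈ W ∩ SaSet G a, w₁ ≠ w₂ := by
      intro a hPa hne
      obtain ⟨w₁, ⟨h1W, h1S⟩, w₂, ⟨h2W, h2S⟩, h12⟩ := key a a₀ hPa ha₀A hne
      exact ⟨w₁, ⟨h1W, hWSa a hPa hne w₁ h1W h1S⟩,
        w₂, ⟨h2W, hWSa a hPa hne w₂ h2W h2S⟩, h12⟩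
    obtain ⟨x, y, hxA, hyA, hxy⟩ := (Set.one_lt_ncard_iff (Set.toFinite _)).1 h2
    have ha₁ : ∃ a₁, PA a₁ ∧ a₁ ≠ a₀ := by
      by_cases hx0 : x = a₀
      · exact ⟨y, hyA, fun hc => hxy (by rw [hx0, hc])⟩
      · exact ⟨x, hxA, hx0⟩
    obtain ⟨a₁, ha₁A, ha₁0⟩ := ha₁
    obtain ⟨w₁, hw₁, w₂, hw₂, hw12⟩ := htwo a₁ ha₁A ha₁0
    set f : V → BSVertex G := fun a =>
      if a = a₀ then w₂ else if a = a₁ then w₁ else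
        if h : (W ∩ SaSet G a).Nonempty then h.choose else w₁ with hfdef
    have hf0 : f a₀ = w₂ := by simp [hfdef]
    have hw1eq : f a₁ = w₁ := by simp [hfdef, ha₁0]
    have hfW : ∀ a ∈ {v | PA v}, f a ∈ W := by
      intro a haA
      by_cases h0 : a = a₀
      · simpa [hfdef, h0] using hw₂.1
      · by_cases h1 : a = a₁
        · rw [h1, hw1eq]; exact hw₁.1
        · have hne : (W ∩ SaSet G a).Nonempty := by
            obtain ⟨u, hu, -⟩ := htwo a haA h0
            exact ⟨u, hu⟩
          simp only [hfdef, if_neg h0, if_neg h1, dif_pos hne]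
          exact hne.choose_spec.1
    have hfS : ∀ a, PA a → a ≠ a₀ → f a ∈ SaSet G a := by
      intro a haA h0
      by_cases h1 : a = a₁
      · rw [h1, hw1eq]; exact h1 ▸ hw₁.2
      · have hne : (W ∩ SaSet G a).Nonempty := by
          obtain ⟨u, hu, -⟩ := htwo a haA h0
          exact ⟨u, hu⟩
        simp only [hfdef, if_neg h0, if_neg h1, dif_pos hne]
        exact hne.choose_spec.2
    refine Set.ncard_le_ncard_of_injOn f hfW ?_ (Set.toFinite W)
    intro a haA b hbA hfe
    by_contra hne
    have hw2S : w₂ ∈ SaSet G a₁ := hw₂.2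
    by_cases h0a : a = a₀
    · by_cases hb1 : b = a₁
      · apply hw12
        rw [← hw1eq, ← hb1, ← hfe, h0a, hf0]
      · have hbne : b ≠ a₀ := by rw [h0a] at hne; exact fun hc => hne hc.symm
        have hfb : f b ∈ SaSet G b := hfS b hbA hbne
        have hfb2 : f b = w₂ := by rw [← hfe, h0a, hf0]
        rw [hfb2] at hfb
        exact SaSet_disj hcb ha₁A hbA (fun hc => hb1 hc.symm) hw2S hfb
    · by_cases h0b : b = a₀
      · by_cases ha1 : a = a₁
        · apply hw12
          rw [← hw1eq, ← ha1, hfe, h0b, hf0]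
        · have hfa : f a ∈ SaSet G a := hfS a haA h0a
          have hfa2 : f a = w₂ := by rw [hfe, h0b, hf0]
          rw [hfa2] at hfa
          exact SaSet_disj hcb ha₁A haA (fun hc => ha1 hc.symm) hw2S hfa
      · exact SaSet_disj hcb haA hbA hne (hfS a haA h0a) (hfe ▸ hfS b hbA h0b)

end Lower

lemma exists_double_cover {α β : Type*} {T : Set β} (hT : T.Finite) :
    ∀ S : Set α, S.Finite → 2 * T.ncard ≤ S.ncard → T.Nonempty →
    ∃ c : α → β, (∀ a ∈ S, c a ∈ T) ∧
      ∀ b ∈ T, ∃ a₁ ∈ S, ∃ a₂ ∈ S, a₁ ≠ a₂ ∧ c a₁ = b ∧ c a₂ = b := by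
  classical
  induction T, hT using Set.Finite.induction_on with
  | empty => intro S _ _ hTne; exact absurd hTne (by simp)
  | @insert b T' hbT' hT'fin ih =>
    intro S hSfin hcard _
    have hT'card : (insert b T').ncard = T'.ncard + 1 :=
      Set.ncard_insert_of_notMem hbT' hT'fin
    rw [hT'card] at hcard
    have hS2 : 2 ≤ S.ncard := by omega
    obtain ⟨s₁, s₂, hs₁, hs₂, hs12⟩ := (Set.one_lt_ncard_iff hSfin).1 (by omega)
    by_cases hT' : T'.Nonempty
    · have hsub : {s₁, s₂} ⊆ S := by
        intro z hz; rcases hz with rfl | hz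
        · exact hs₁
        · rw [Set.mem_singleton_iff] at hz; exact hz ▸ hs₂
      have hdiffcard : (S \ {s₁, s₂}).ncard = S.ncard - 2 := by
        rw [Set.ncard_diff hsub, Set.ncard_pair hs12]
      obtain ⟨c', hc'T, hc'two⟩ := ih (S \ {s₁, s₂}) hSfin.diff (by omega) hT'
      refine ⟨fun a => if a = s₁ ∨ a = s₂ then b else c' a, ?_, ?_⟩
      · intro a haS
        by_cases h : a = s₁ ∨ a = s₂
        · simp only [if_pos h]; exact Set.mem_insert _ _
        · simp only [if_neg h]
          exact Set.mem_insert_of_mem _ (hc'T a ⟨haS, by simpa using h⟩)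
      · intro b' hb'
        rcases Set.mem_insert_iff.1 hb' with rfl | hb'T
        · exact ⟨s₁, hs₁, s₂, hs₂, hs12, by simp, by simp⟩
        · obtain ⟨a₁, ha₁, a₂, ha₂, h12, hc1, hc2⟩ := hc'two b' hb'T
          have ha₁n : ¬ (a₁ = s₁ ∨ a₁ = s₂) := by
            have := ha₁.2; simpa using this
          have ha₂n : ¬ (a₂ = s₁ ∨ a₂ = s₂) := by
            have := ha₂.2; simpa using this
          exact ⟨a₁, ha₁.1, a₂, ha₂.1, h12,
            by simp only [if_neg ha₁n]; exact hc1, by simp only [if_neg ha₂n]; exact hc2⟩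
    · rw [Set.not_nonempty_iff_eq_empty] at hT'
      subst hT'
      refine ⟨fun _ => b, fun a _ => Set.mem_insert _ _, ?_⟩
      intro b' hb'
      rcases Set.mem_insert_iff.1 hb' with rfl | hb'T
      · exact ⟨s₁, hs₁, s₂, hs₂, hs12, rfl, rfl⟩
      · exact absurd hb'T (by simp)

section Upper

open Classical in
@[simp] lemma DF_ll {PA : V → Prop} {u v : V} :
    DF G PA (Sum.inl u) (Sum.inl v) = if u = v then 0 else if (PA u ↔ PA v) then 4 else 2 := rfl

open Classical in
@[simp] lemma DF_lr {PA : V → Prop} {u : V} {e : G.edgeSet} :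
    DF G PA (Sum.inl u) (Sum.inr e) = if u ∈ (e : Sym2 V) then 1 else 3 := rfl

open Classical in
@[simp] lemma DF_rl {PA : V → Prop} {u : V} {e : G.edgeSet} :
    DF G PA (Sum.inr e) (Sum.inl u) = if u ∈ (e : Sym2 V) then 1 else 3 := rfl

open Classical in
@[simp] lemma DF_rr {PA : V → Prop} {e f : G.edgeSet} :
    DF G PA (Sum.inr e) (Sum.inr f) =
      if e = f then 0 else if (∃ z, z ∈ (e : Sym2 V) ∧ z ∈ (f : Sym2 V)) then 2 else 4 := rfl

lemma DF_lr_odd {PA : V → Prop} {u : V} {e : G.edgeSet} :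
    Odd (DF G PA (Sum.inl u) (Sum.inr e)) := by
  rw [DF_lr]
  by_cases h : u ∈ (e : Sym2 V)
  · rw [if_pos h]; exact ⟨0, rfl⟩
  · rw [if_neg h]; exact ⟨1, rfl⟩

lemma DF_ll_even {PA : V → Prop} {u v : V} :
    Even (DF G PA (Sum.inl u) (Sum.inl v)) := by
  rw [DF_ll]
  by_cases h : u = v
  · rw [if_pos h]; exact ⟨0, rfl⟩
  · rw [if_neg h]
    by_cases h2 : PA u ↔ PA v
    · rw [if_pos h2]; exact ⟨2, rfl⟩
    · rw [if_neg h2]; exact ⟨1, rfl⟩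

lemma DF_rr_even {PA : V → Prop} {e f : G.edgeSet} :
    Even (DF G PA (Sum.inr e) (Sum.inr f)) := by
  rw [DF_rr]
  by_cases h : e = f
  · rw [if_pos h]; exact ⟨0, rfl⟩
  · rw [if_neg h]
    by_cases h2 : ∃ z, z ∈ (e : Sym2 V) ∧ z ∈ (f : Sym2 V)
    · rw [if_pos h2]; exact ⟨1, rfl⟩
    · rw [if_neg h2]; exact ⟨2, rfl⟩

lemma ne_of_even_odd {m n : ℕ} (hm : Even m) (hn : Odd n) : m ≠ n := by
  rintro rfl; exact (Nat.not_odd_iff_even.mpr hm) hn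

def WSet (G : SimpleGraph V) (PA : V → Prop) (a₀ : V) (c : V → V) (e₀ : G.edgeSet) :
    Set (BSVertex G) :=
  insert (Sum.inl a₀)
    ((fun a => Sum.inr (mkE G e₀ a (c a))) '' ({v | PA v} \ {a₀}))

variable {PA : V → Prop} {a₀ : V} {c : V → V} {e₀ : G.edgeSet}
  (hcb : CBhyp G PA) (ha₀ : PA a₀)
  (hc1 : ∀ a, PA a → a ≠ a₀ → ¬ PA (c a))

include hcb ha₀ hc1

lemma Ecoe {a : V} (ha : PA a) (hne : a ≠ a₀) :
    ((mkE G e₀ a (c a) : G.edgeSet) : Sym2 V) = s(a, c a) :=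
  mkE_coe (adj_of_PA hcb ha (hc1 a ha hne))

lemma mem_E {z a : V} (ha : PA a) (hne : a ≠ a₀) :
    z ∈ ((mkE G e₀ a (c a) : G.edgeSet) : Sym2 V) ↔ z = a ∨ z = c a := by
  rw [Ecoe hcb ha₀ hc1 ha hne]; exact Sym2.mem_iff

lemma E_inj {a a' : V} (ha : PA a) (hnea : a ≠ a₀) (ha' : PA a') (hnea' : a' ≠ a₀)
    (h : (mkE G e₀ a (c a) : G.edgeSet) = mkE G e₀ a' (c a')) : a = a' := by
  have hmem : a ∈ ((mkE G e₀ a' (c a') : G.edgeSet) : Sym2 V) := by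
    rw [← h]; rw [mem_E hcb ha₀ hc1 ha hnea]; exact Or.inl rfl
  rw [mem_E hcb ha₀ hc1 ha' hnea'] at hmem
  rcases hmem with h1 | h1
  · exact h1
  · exact absurd (h1 ▸ ha) (hc1 a' ha' hnea')

lemma E_mem_W {a : V} (ha : PA a) (hne : a ≠ a₀) :
    Sum.inr (mkE G e₀ a (c a)) ∈ WSet G PA a₀ c e₀ :=
  Set.mem_insert_of_mem _ ⟨a, ⟨ha, hne⟩, rfl⟩

omit hcb ha₀ hc1 in
lemma a₀_mem_W : (Sum.inl a₀ : BSVertex G) ∈ WSet G PA a₀ c e₀ :=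
  Set.mem_insert _ _

end Upper

section Cases

def TwoDist (G : SimpleGraph V) (PA : V → Prop) (W : Set (BSVertex G))
    (x y : BSVertex G) : Prop :=
  ∃ w₁ ∈ W, ∃ w₂ ∈ W, w₁ ≠ w₂ ∧
    DF G PA x w₁ ≠ DF G PA y w₁ ∧ DF G PA x w₂ ≠ DF G PA y w₂

lemma TwoDist_symm {PA : V → Prop} {W : Set (BSVertex G)} {x y : BSVertex G}
    (h : TwoDist G PA W x y) : TwoDist G PA W y x := by
  obtain ⟨w₁, h1, w₂, h2, h12, d1, d2⟩ := h
  exact ⟨w₁, h1, w₂, h2, h12, d1.symm, d2.symm⟩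

lemma inl_ne_inr {v : V} {e : G.edgeSet} :
    (Sum.inl v : BSVertex G) ≠ Sum.inr e := fun hc => Sum.inl_ne_inr hc

variable {PA : V → Prop} {a₀ : V} {c : V → V} {e₀ : G.edgeSet}
  (hcb : CBhyp G PA) (ha₀ : PA a₀)
  (hc1 : ∀ a, PA a → a ≠ a₀ → ¬ PA (c a))
  (hc2 : ∀ b, ¬ PA b → ∃ a₁ a₂, (PA a₁ ∧ a₁ ≠ a₀) ∧ (PA a₂ ∧ a₂ ≠ a₀) ∧
    a₁ ≠ a₂ ∧ c a₁ = b ∧ c a₂ = b)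

include hcb ha₀ hc1

lemma notmem_E_of_PA {z a : V} (hz : PA z) (hzne : z ≠ a) (ha : PA a) (hne : a ≠ a₀) :
    z ∉ ((mkE G e₀ a (c a) : G.edgeSet) : Sym2 V) := by
  rw [mem_E hcb ha₀ hc1 ha hne]
  rintro (rfl | rfl)
  · exact hzne rfl
  · exact (hc1 a ha hne) hz

lemma mem_E_self {a : V} (ha : PA a) (hne : a ≠ a₀) :
    a ∈ ((mkE G e₀ a (c a) : G.edgeSet) : Sym2 V) := by
  rw [mem_E hcb ha₀ hc1 ha hne]; exact Or.inl rfl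

lemma DF_val_lr_mem {z a : V} (hz : z ∈ ((mkE G e₀ a (c a) : G.edgeSet) : Sym2 V)) :
    DF G PA (Sum.inl z) (Sum.inr (mkE G e₀ a (c a))) = 1 := by
  rw [DF_lr, if_pos hz]

omit hcb ha₀ hc1 in
lemma DF_val_lr_notmem {z : V} {e : G.edgeSet} (hz : z ∉ (e : Sym2 V)) :
    DF G PA (Sum.inl z) (Sum.inr e) = 3 := by
  rw [DF_lr, if_neg hz]

omit hcb hc1 in
lemma DF_val_ll_A {u : V} (hu : PA u) (hu0 : u ≠ a₀) :
    DF G PA (Sum.inl u) (Sum.inl a₀) = 4 := by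
  rw [DF_ll, if_neg hu0, if_pos (iff_of_true hu ha₀)]

omit hcb hc1 in
lemma DF_val_ll_B {u : V} (hu : ¬ PA u) :
    DF G PA (Sum.inl u) (Sum.inl a₀) = 2 := by
  have hu0 : u ≠ a₀ := fun hc => hu (hc ▸ ha₀)
  rw [DF_ll, if_neg hu0, if_neg (fun hc : PA u ↔ PA a₀ => hu (hc.2 ha₀))]

omit hcb ha₀ hc1 in
lemma DF_val_ll_self {u : V} : DF G PA (Sum.inl u) (Sum.inl u) = 0 := by
  rw [DF_ll, if_pos rfl]

lemma L_AA {u v : V} (hu : PA u) (hv : PA v) (huv : u ≠ v) :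
    TwoDist G PA (WSet G PA a₀ c e₀) (Sum.inl u) (Sum.inl v) := by
  classical
  by_cases hu0 : u = a₀
  · rw [hu0]
    have hv0 : v ≠ a₀ := fun hc => huv (hu0.trans hc.symm)
    refine ⟨Sum.inl a₀, a₀_mem_W, Sum.inr (mkE G e₀ v (c v)),
      E_mem_W hcb ha₀ hc1 hv hv0, inl_ne_inr, ?_, ?_⟩
    · rw [DF_val_ll_self, DF_val_ll_A ha₀ hv hv0]; omega
    · rw [DF_val_lr_notmem (notmem_E_of_PA hcb ha₀ hc1 ha₀ (fun hc => hv0 (hc.symm)) hv hv0),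
        DF_val_lr_mem hcb ha₀ hc1 (mem_E_self hcb ha₀ hc1 hv hv0)]
      omega
  · by_cases hv0 : v = a₀
    · rw [hv0]
      refine ⟨Sum.inl a₀, a₀_mem_W, Sum.inr (mkE G e₀ u (c u)),
        E_mem_W hcb ha₀ hc1 hu hu0, inl_ne_inr, ?_, ?_⟩
      · rw [DF_val_ll_self, DF_val_ll_A ha₀ hu hu0]; omega
      · rw [DF_val_lr_mem hcb ha₀ hc1 (mem_E_self hcb ha₀ hc1 hu hu0),
          DF_val_lr_notmem (notmem_E_of_PA hcb ha₀ hc1 ha₀ (fun hc => hu0 hc.symm) hu hu0)]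
        omega
    · refine ⟨Sum.inr (mkE G e₀ u (c u)), E_mem_W hcb ha₀ hc1 hu hu0,
        Sum.inr (mkE G e₀ v (c v)), E_mem_W hcb ha₀ hc1 hv hv0, ?_, ?_, ?_⟩
      · intro hc
        exact huv (E_inj hcb ha₀ hc1 hu hu0 hv hv0 (Sum.inr.inj hc))
      · rw [DF_val_lr_mem hcb ha₀ hc1 (mem_E_self hcb ha₀ hc1 hu hu0),
          DF_val_lr_notmem (notmem_E_of_PA hcb ha₀ hc1 hv (Ne.symm huv) hu hu0)]
        omega
      · rw [DF_val_lr_notmem (notmem_E_of_PA hcb ha₀ hc1 hu huv hv hv0),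
          DF_val_lr_mem hcb ha₀ hc1 (mem_E_self hcb ha₀ hc1 hv hv0)]
        omega

include hc2

lemma L_BB {u v : V} (hu : ¬ PA u) (hv : ¬ PA v) (huv : u ≠ v) :
    TwoDist G PA (WSet G PA a₀ c e₀) (Sum.inl u) (Sum.inl v) := by
  classical
  obtain ⟨a₁, a₂, ⟨ha₁, ha₁0⟩, ⟨ha₂, ha₂0⟩, h12, hca₁, hca₂⟩ := hc2 u hu
  have huE : ∀ a, PA a → a ≠ a₀ → c a = u →
      u ∈ ((mkE G e₀ a (c a) : G.edgeSet) : Sym2 V) := by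
    intro a ha hne hca
    rw [mem_E hcb ha₀ hc1 ha hne]
    exact Or.inr hca.symm
  have hvE : ∀ a, PA a → a ≠ a₀ → c a = u →
      v ∉ ((mkE G e₀ a (c a) : G.edgeSet) : Sym2 V) := by
    intro a ha hne hca
    rw [mem_E hcb ha₀ hc1 ha hne]
    rintro (rfl | rfl)
    · exact hv ha
    · exact huv (hca ▸ rfl)
  refine ⟨Sum.inr (mkE G e₀ a₁ (c a₁)), E_mem_W hcb ha₀ hc1 ha₁ ha₁0,
    Sum.inr (mkE G e₀ a₂ (c a₂)), E_mem_W hcb ha₀ hc1 ha₂ ha₂0, ?_, ?_, ?_⟩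
  · intro hc
    exact h12 (E_inj hcb ha₀ hc1 ha₁ ha₁0 ha₂ ha₂0 (Sum.inr.inj hc))
  · rw [DF_val_lr_mem hcb ha₀ hc1 (huE a₁ ha₁ ha₁0 hca₁),
      DF_val_lr_notmem (hvE a₁ ha₁ ha₁0 hca₁)]
    omega
  · rw [DF_val_lr_mem hcb ha₀ hc1 (huE a₂ ha₂ ha₂0 hca₂),
      DF_val_lr_notmem (hvE a₂ ha₂ ha₂0 hca₂)]
    omega

lemma L_AB {u v : V} (hu : PA u) (hv : ¬ PA v) :
    TwoDist G PA (WSet G PA a₀ c e₀) (Sum.inl u) (Sum.inl v) := by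
  classical
  have huv : u ≠ v := fun hc => hv (hc ▸ hu)
  obtain ⟨a₁, a₂, ⟨ha₁, ha₁0⟩, ⟨ha₂, ha₂0⟩, h12, hca₁, hca₂⟩ := hc2 v hv
  have ha : ∃ a, (PA a ∧ a ≠ a₀) ∧ a ≠ u ∧ c a = v := by
    by_cases h : a₁ = u
    · exact ⟨a₂, ⟨ha₂, ha₂0⟩, fun hc => h12 (h.trans hc.symm), hca₂⟩
    · exact ⟨a₁, ⟨ha₁, ha₁0⟩, h, hca₁⟩
  obtain ⟨a, ⟨ha, ha0⟩, hau, hca⟩ := ha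
  refine ⟨Sum.inl a₀, a₀_mem_W, Sum.inr (mkE G e₀ a (c a)),
    E_mem_W hcb ha₀ hc1 ha ha0, inl_ne_inr, ?_, ?_⟩
  · rw [DF_val_ll_B ha₀ hv]
    by_cases h : u = a₀
    · rw [h, DF_val_ll_self]; omega
    · rw [DF_val_ll_A ha₀ hu h]; omega
  · have hunm : u ∉ ((mkE G e₀ a (c a) : G.edgeSet) : Sym2 V) :=
      notmem_E_of_PA hcb ha₀ hc1 hu (fun hc => hau hc.symm) ha ha0
    have hvm : v ∈ ((mkE G e₀ a (c a) : G.edgeSet) : Sym2 V) := by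
      rw [mem_E hcb ha₀ hc1 ha ha0]; exact Or.inr hca.symm
    rw [DF_val_lr_notmem hunm, DF_val_lr_mem hcb ha₀ hc1 hvm]
    omega

omit hcb ha₀ hc1 hc2 in
lemma DF_rl_odd {PA : V → Prop} {u : V} {f : G.edgeSet} :
    Odd (DF G PA (Sum.inr f) (Sum.inl u)) := by
  rw [DF_rl]
  by_cases h : u ∈ (f : Sym2 V)
  · rw [if_pos h]; exact ⟨0, rfl⟩
  · rw [if_neg h]; exact ⟨1, rfl⟩

lemma L_mixed {u : V} {f : G.edgeSet} :
    TwoDist G PA (WSet G PA a₀ c e₀) (Sum.inl u) (Sum.inr f) := by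
  classical
  obtain ⟨a₁, a₂, ⟨ha₁, ha₁0⟩, -, -, -, -⟩ := hc2 (eB hcb f) (eB_nPA hcb f)
  refine ⟨Sum.inl a₀, a₀_mem_W, Sum.inr (mkE G e₀ a₁ (c a₁)),
    E_mem_W hcb ha₀ hc1 ha₁ ha₁0, inl_ne_inr, ?_, ?_⟩
  · exact ne_of_even_odd DF_ll_even DF_rl_odd
  · exact fun hc => (ne_of_even_odd DF_rr_even DF_lr_odd) hc.symm

end Cases
lemma pick_two {α : Type*} {a₁ a₂ a₃ a₄ u u' : α}
    (h12 : a₁ ≠ a₂) (h34 : a₃ ≠ a₄) (h13 : a₁ ≠ a₃) (h14 : a₁ ≠ a₄)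
    (h23 : a₂ ≠ a₃) (h24 : a₂ ≠ a₄) :
    ∃ x y, x ≠ y ∧
      ((x = a₁ ∨ x = a₂) ∨ (x = a₃ ∨ x = a₄)) ∧ x ≠ u ∧ x ≠ u' ∧
      ((y = a₁ ∨ y = a₂) ∨ (y = a₃ ∨ y = a₄)) ∧ y ≠ u ∧ y ≠ u' := by
  by_cases e1 : a₁ = u ∨ a₁ = u'
  · by_cases e3 : a₃ = u ∨ a₃ = u'
    · have ha₂ : a₂ ≠ u ∧ a₂ ≠ u' := by
        constructor <;> intro hc <;> rcases e1 with r | r <;> rcases e3 with r' | r'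
        · exact h12 (r.trans hc.symm)
        · exact h12 (r.trans hc.symm)
        · exact h23 (hc.trans r'.symm)
        · exact h13 (r.trans r'.symm)
        · exact h13 (r.trans r'.symm)
        · exact h23 (hc.trans r'.symm)
        · exact h12 (r.trans hc.symm)
        · exact h12 (r.trans hc.symm)
      have ha₄ : a₄ ≠ u ∧ a₄ ≠ u' := by
        constructor <;> intro hc <;> rcases e1 with r | r <;> rcases e3 with r' | r'
        · exact h14 (r.trans hc.symm)
        · exact h14 (r.trans hc.symm)
        · exact h34 (r'.trans hc.symm)
        · exact h13 (r.trans r'.symm)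
        · exact h13 (r.trans r'.symm)
        · exact h34 (r'.trans hc.symm)
        · exact h14 (r.trans hc.symm)
        · exact h14 (r.trans hc.symm)
      exact ⟨a₂, a₄, h24, Or.inl (Or.inr rfl), ha₂.1, ha₂.2,
        Or.inr (Or.inr rfl), ha₄.1, ha₄.2⟩
    · push_neg at e3
      by_cases e2 : a₂ = u ∨ a₂ = u'
      · have ha₄ : a₄ ≠ u ∧ a₄ ≠ u' := by
          constructor <;> intro hc <;> rcases e1 with r | r <;> rcases e2 with r' | r'
          · exact h14 (r.trans hc.symm)
          · exact h14 (r.trans hc.symm)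
          · exact h24 (r'.trans hc.symm)
          · exact h12 (r.trans r'.symm)
          · exact h12 (r.trans r'.symm)
          · exact h24 (r'.trans hc.symm)
          · exact h14 (r.trans hc.symm)
          · exact h14 (r.trans hc.symm)
        exact ⟨a₃, a₄, h34, Or.inr (Or.inl rfl), e3.1, e3.2,
          Or.inr (Or.inr rfl), ha₄.1, ha₄.2⟩
      · push_neg at e2
        exact ⟨a₂, a₃, h23, Or.inl (Or.inr rfl), e2.1, e2.2,
          Or.inr (Or.inl rfl), e3.1, e3.2⟩
  · push_neg at e1
    by_cases e2 : a₂ = u ∨ a₂ = u'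
    · by_cases e3 : a₃ = u ∨ a₃ = u'
      · have ha₄ : a₄ ≠ u ∧ a₄ ≠ u' := by
          constructor <;> intro hc <;> rcases e2 with r | r <;> rcases e3 with r' | r'
          · exact h24 (r.trans hc.symm)
          · exact h24 (r.trans hc.symm)
          · exact h34 (r'.trans hc.symm)
          · exact h23 (r.trans r'.symm)
          · exact h23 (r.trans r'.symm)
          · exact h34 (r'.trans hc.symm)
          · exact h24 (r.trans hc.symm)
          · exact h24 (r.trans hc.symm)
        exact ⟨a₁, a₄, h14, Or.inl (Or.inl rfl), e1.1, e1.2,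
          Or.inr (Or.inr rfl), ha₄.1, ha₄.2⟩
      · push_neg at e3
        exact ⟨a₁, a₃, h13, Or.inl (Or.inl rfl), e1.1, e1.2,
          Or.inr (Or.inl rfl), e3.1, e3.2⟩
    · push_neg at e2
      exact ⟨a₁, a₂, h12, Or.inl (Or.inl rfl), e1.1, e1.2,
        Or.inl (Or.inr rfl), e2.1, e2.2⟩

section EE

variable {PA : V → Prop} {a₀ : V} {c : V → V} {e₀ : G.edgeSet}
  (hcb : CBhyp G PA) (ha₀ : PA a₀)
  (hc1 : ∀ a, PA a → a ≠ a₀ → ¬ PA (c a))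
  (hc2 : ∀ b, ¬ PA b → ∃ a₁ a₂, (PA a₁ ∧ a₁ ≠ a₀) ∧ (PA a₂ ∧ a₂ ≠ a₀) ∧
    a₁ ≠ a₂ ∧ c a₁ = b ∧ c a₂ = b)

include hcb ha₀ hc1

lemma EE_helper_cross {e f : G.edgeSet} {u b u' b' a : V}
    (hPu : PA u) (hnb : ¬ PA b) (hPu' : PA u') (hnb' : ¬ PA b')
    (he : (e : Sym2 V) = s(u, b)) (hf : (f : Sym2 V) = s(u', b'))
    (hbb' : b ≠ b') (ha : PA a) (ha0 : a ≠ a₀) (hau : a ≠ u) (hau' : a ≠ u')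
    (hca : c a = b) :
    DF G PA (Sum.inr e) (Sum.inr (mkE G e₀ a (c a))) = 2 ∧
    DF G PA (Sum.inr f) (Sum.inr (mkE G e₀ a (c a))) = 4 := by
  have hEcoe : ((mkE G e₀ a (c a) : G.edgeSet) : Sym2 V) = s(a, b) := by
    rw [Ecoe hcb ha₀ hc1 ha ha0, hca]
  constructor
  · rw [DF_rr]
    have hne : e ≠ mkE G e₀ a (c a) := by
      intro hc
      have : (e : Sym2 V) = s(a, b) := by rw [hc, hEcoe]
      rw [he, Sym2.eq_iff] at this
      rcases this with ⟨h1, -⟩ | ⟨h1, -⟩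
      · exact hau h1.symm
      · exact hnb (h1 ▸ hPu)
    rw [if_neg hne, if_pos ⟨b, by rw [he]; exact Sym2.mem_iff.2 (Or.inr rfl),
      by rw [hEcoe]; exact Sym2.mem_iff.2 (Or.inr rfl)⟩]
  · rw [DF_rr]
    have hne : f ≠ mkE G e₀ a (c a) := by
      intro hc
      have : (f : Sym2 V) = s(a, b) := by rw [hc, hEcoe]
      rw [hf, Sym2.eq_iff] at this
      rcases this with ⟨h1, h2⟩ | ⟨h1, -⟩
      · exact hbb' h2.symm
      · exact hnb (h1 ▸ hPu')
    rw [if_neg hne, if_neg ?_]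
    rintro ⟨z, hzf, hzE⟩
    rw [hf, Sym2.mem_iff] at hzf
    rw [hEcoe, Sym2.mem_iff] at hzE
    rcases hzf with rfl | rfl <;> rcases hzE with rfl | rfl
    · exact hau' rfl
    · exact hnb hPu'
    · exact hnb' ha
    · exact hbb' rfl

lemma EE_helper_shareB {e f : G.edgeSet} {u b u' : V}
    (hPu : PA u) (hnb : ¬ PA b) (hPu' : PA u')
    (he : (e : Sym2 V) = s(u, b)) (hf : (f : Sym2 V) = s(u', b))
    (huu' : u ≠ u') (hu0 : u ≠ a₀) :
    DF G PA (Sum.inr e) (Sum.inr (mkE G e₀ u (c u))) ≠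
      DF G PA (Sum.inr f) (Sum.inr (mkE G e₀ u (c u))) := by
  have hEcoe : ((mkE G e₀ u (c u) : G.edgeSet) : Sym2 V) = s(u, c u) :=
    Ecoe hcb ha₀ hc1 hPu hu0
  have hcu : ¬ PA (c u) := hc1 u hPu hu0
  have hfne : f ≠ mkE G e₀ u (c u) := by
    intro hc
    have : (f : Sym2 V) = s(u, c u) := by rw [hc, hEcoe]
    rw [hf, Sym2.eq_iff] at this
    rcases this with ⟨h1, -⟩ | ⟨h1, -⟩
    · exact huu' h1.symm
    · exact hcu (h1 ▸ hPu')
  by_cases hbc : c u = b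
  · have heE : e = mkE G e₀ u (c u) := by
      apply Subtype.ext
      rw [he, hEcoe, hbc]
    have h1 : DF G PA (Sum.inr e) (Sum.inr (mkE G e₀ u (c u))) = 0 := by
      rw [DF_rr, if_pos heE]
    have h2 : DF G PA (Sum.inr f) (Sum.inr (mkE G e₀ u (c u))) = 2 := by
      rw [DF_rr, if_neg hfne, if_pos ⟨b, by rw [hf]; exact Sym2.mem_iff.2 (Or.inr rfl),
        by rw [hEcoe, hbc]; exact Sym2.mem_iff.2 (Or.inr rfl)⟩]
    omega
  · have heE : e ≠ mkE G e₀ u (c u) := by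
      intro hc
      have : (e : Sym2 V) = s(u, c u) := by rw [hc, hEcoe]
      rw [he, Sym2.eq_iff] at this
      rcases this with ⟨-, h2⟩ | ⟨h1, -⟩
      · exact hbc h2.symm
      · exact hcu (h1 ▸ hPu)
    have h1 : DF G PA (Sum.inr e) (Sum.inr (mkE G e₀ u (c u))) = 2 := by
      rw [DF_rr, if_neg heE, if_pos ⟨u, by rw [he]; exact Sym2.mem_iff.2 (Or.inl rfl),
        by rw [hEcoe]; exact Sym2.mem_iff.2 (Or.inl rfl)⟩]
    have h2 : DF G PA (Sum.inr f) (Sum.inr (mkE G e₀ u (c u))) = 4 := by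
      rw [DF_rr, if_neg hfne, if_neg ?_]
      rintro ⟨z, hzf, hzE⟩
      rw [hf, Sym2.mem_iff] at hzf
      rw [hEcoe, Sym2.mem_iff] at hzE
      rcases hzf with rfl | rfl <;> rcases hzE with rfl | rfl
      · exact huu' rfl
      · exact hcu hPu'
      · exact hnb hPu
      · exact hbc rfl
    omega

include hc2

lemma L_EE {e f : G.edgeSet} (hef : e ≠ f) :
    TwoDist G PA (WSet G PA a₀ c e₀) (Sum.inr e) (Sum.inr f) := by
  classical
  obtain ⟨u, b, hPu, hnb, he⟩ := edge_exists hcb e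
  obtain ⟨u', b', hPu', hnb', hf⟩ := edge_exists hcb f
  by_cases hbb : b = b'
  · subst hbb
    have huu' : u ≠ u' := by
      intro h
      exact hef (Subtype.ext (by rw [he, hf, h]))
    by_cases hu0 : u = a₀
    · have hu'0 : u' ≠ a₀ := fun hc => huu' (hu0.trans hc.symm)
      refine ⟨Sum.inl a₀, a₀_mem_W, Sum.inr (mkE G e₀ u' (c u')),
        E_mem_W hcb ha₀ hc1 hPu' hu'0, inl_ne_inr, ?_, ?_⟩
      · have h1 : DF G PA (Sum.inr e) (Sum.inl a₀) = 1 := by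
          rw [DF_rl, if_pos (by rw [he]; exact Sym2.mem_iff.2 (Or.inl hu0.symm))]
        have h2 : DF G PA (Sum.inr f) (Sum.inl a₀) = 3 := by
          rw [DF_rl, if_neg ?_]
          rw [hf, Sym2.mem_iff]
          rintro (rfl | rfl)
          · exact hu'0 rfl
          · exact hnb' ha₀
        omega
      · exact (EE_helper_shareB hcb ha₀ hc1 hPu' hnb' hPu hf he (Ne.symm huu') hu'0).symm
    · by_cases hu'0 : u' = a₀
      · refine ⟨Sum.inl a₀, a₀_mem_W, Sum.inr (mkE G e₀ u (c u)),
          E_mem_W hcb ha₀ hc1 hPu hu0, inl_ne_inr, ?_, ?_⟩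
        · have h1 : DF G PA (Sum.inr e) (Sum.inl a₀) = 3 := by
            rw [DF_rl, if_neg ?_]
            rw [he, Sym2.mem_iff]
            rintro (rfl | rfl)
            · exact hu0 rfl
            · exact hnb ha₀
          have h2 : DF G PA (Sum.inr f) (Sum.inl a₀) = 1 := by
            rw [DF_rl, if_pos (by rw [hf]; exact Sym2.mem_iff.2 (Or.inl hu'0.symm))]
          omega
        · exact EE_helper_shareB hcb ha₀ hc1 hPu hnb hPu' he hf huu' hu0
      · refine ⟨Sum.inr (mkE G e₀ u (c u)), E_mem_W hcb ha₀ hc1 hPu hu0,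
          Sum.inr (mkE G e₀ u' (c u')), E_mem_W hcb ha₀ hc1 hPu' hu'0, ?_, ?_, ?_⟩
        · intro hc
          exact huu' (E_inj hcb ha₀ hc1 hPu hu0 hPu' hu'0 (Sum.inr.inj hc))
        · exact EE_helper_shareB hcb ha₀ hc1 hPu hnb hPu' he hf huu' hu0
        · exact (EE_helper_shareB hcb ha₀ hc1 hPu' hnb' hPu hf he (Ne.symm huu') hu'0).symm
  · obtain ⟨a₁, a₂, ⟨ha₁, ha₁0⟩, ⟨ha₂, ha₂0⟩, h12, hca₁, hca₂⟩ := hc2 b hnb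
    obtain ⟨a₃, a₄, ⟨ha₃, ha₃0⟩, ⟨ha₄, ha₄0⟩, h34, hca₃, hca₄⟩ := hc2 b' hnb'
    have h13 : a₁ ≠ a₃ := fun h => hbb (by rw [← hca₁, h, hca₃])
    have h14 : a₁ ≠ a₄ := fun h => hbb (by rw [← hca₁, h, hca₄])
    have h23 : a₂ ≠ a₃ := fun h => hbb (by rw [← hca₂, h, hca₃])
    have h24 : a₂ ≠ a₄ := fun h => hbb (by rw [← hca₂, h, hca₄])
    obtain ⟨x, y, hxy, hxmem, hxu, hxu', hymem, hyu, hyu'⟩ :=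
      pick_two h12 h34 h13 h14 h23 h24 (u := u) (u' := u')
    have hgood : ∀ z, ((z = a₁ ∨ z = a₂) ∨ (z = a₃ ∨ z = a₄)) → z ≠ u → z ≠ u' →
        (PA z ∧ z ≠ a₀) ∧
        DF G PA (Sum.inr e) (Sum.inr (mkE G e₀ z (c z))) ≠
          DF G PA (Sum.inr f) (Sum.inr (mkE G e₀ z (c z))) := by
      intro z hz hzu hzu'
      have hzP : (PA z ∧ z ≠ a₀) ∧ (c z = b ∨ c z = b') := by
        rcases hz with (rfl | rfl) | (rfl | rfl)
        · exact ⟨⟨ha₁, ha₁0⟩, Or.inl hca₁⟩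
        · exact ⟨⟨ha₂, ha₂0⟩, Or.inl hca₂⟩
        · exact ⟨⟨ha₃, ha₃0⟩, Or.inr hca₃⟩
        · exact ⟨⟨ha₄, ha₄0⟩, Or.inr hca₄⟩
      obtain ⟨⟨hzPA, hz0⟩, hcz⟩ := hzP
      refine ⟨⟨hzPA, hz0⟩, ?_⟩
      rcases hcz with hcz | hcz
      · obtain ⟨hh1, hh2⟩ := EE_helper_cross hcb ha₀ hc1 hPu hnb hPu' hnb' he hf
          hbb hzPA hz0 hzu hzu' hcz
        rw [hh1, hh2]; omega
      · obtain ⟨hh1, hh2⟩ := EE_helper_cross hcb ha₀ hc1 hPu' hnb' hPu hnb hf he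
          (Ne.symm hbb) hzPA hz0 hzu' hzu hcz
        rw [hh2, hh1]; omega
    obtain ⟨⟨hxP, hx0⟩, hxd⟩ := hgood x hxmem hxu hxu'
    obtain ⟨⟨hyP, hy0⟩, hyd⟩ := hgood y hymem hyu hyu'
    refine ⟨Sum.inr (mkE G e₀ x (c x)), E_mem_W hcb ha₀ hc1 hxP hx0,
      Sum.inr (mkE G e₀ y (c y)), E_mem_W hcb ha₀ hc1 hyP hy0, ?_, hxd, hyd⟩
    intro hc
    exact hxy (E_inj hcb ha₀ hc1 hxP hx0 hyP hy0 (Sum.inr.inj hc))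

end EE

section Assemble

variable {PA : V → Prop} {a₀ : V} {c : V → V} {e₀ : G.edgeSet}
  (hcb : CBhyp G PA) (ha₀ : PA a₀)
  (hc1 : ∀ a, PA a → a ≠ a₀ → ¬ PA (c a))
  (hc2 : ∀ b, ¬ PA b → ∃ a₁ a₂, (PA a₁ ∧ a₁ ≠ a₀) ∧ (PA a₂ ∧ a₂ ≠ a₀) ∧
    a₁ ≠ a₂ ∧ c a₁ = b ∧ c a₂ = b)

include hcb ha₀ hc1 hc2

lemma key_two : ∀ x y : BSVertex G, x ≠ y → TwoDist G PA (WSet G PA a₀ c e₀) x y := by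
  intro x y hxy
  cases x with
  | inl u =>
    cases y with
    | inl v =>
      have huv : u ≠ v := fun hc => hxy (by rw [hc])
      by_cases hu : PA u <;> by_cases hv : PA v
      · exact L_AA hcb ha₀ hc1 hu hv huv
      · exact L_AB hcb ha₀ hc1 hc2 hu hv
      · exact TwoDist_symm (L_AB hcb ha₀ hc1 hc2 hv hu)
      · exact L_BB hcb ha₀ hc1 hc2 hu hv huv
    | inr f => exact L_mixed hcb ha₀ hc1 hc2
  | inr e =>
    cases y with
    | inl v => exact TwoDist_symm (L_mixed hcb ha₀ hc1 hc2)
    | inr f =>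
      have hef : e ≠ f := fun hc => hxy (by rw [hc])
      exact L_EE hcb ha₀ hc1 hc2 hef

lemma WSet_FT (ha : ∃ a, PA a) (hb : ∃ b, ¬ PA b) :
    IsFTResolving (BS G) (WSet G PA a₀ c e₀) := by
  have hDF := dist_eq_DF hcb ha hb
  constructor
  · intro x y hxy
    obtain ⟨w₁, h1, _, _, _, d1, -⟩ := key_two hcb ha₀ hc1 hc2 x y hxy
    exact ⟨w₁, h1, by rw [hDF, hDF]; exact d1⟩
  · intro w hw x y hxy
    obtain ⟨w₁, h1, w₂, h2, h12, d1, d2⟩ := key_two hcb ha₀ hc1 hc2 x y hxy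
    by_cases hww : w₁ = w
    · refine ⟨w₂, ⟨h2, ?_⟩, by rw [hDF, hDF]; exact d2⟩
      intro hc
      exact h12 (hww.trans (Set.mem_singleton_iff.1 hc).symm)
    · exact ⟨w₁, ⟨h1, fun hc => hww (Set.mem_singleton_iff.1 hc)⟩,
        by rw [hDF, hDF]; exact d1⟩

omit hc2 in
lemma WSet_ncard [Finite V] :
    (WSet G PA a₀ c e₀).ncard = {v | PA v}.ncard := by
  have hinj : Set.InjOn (fun a => (Sum.inr (mkE G e₀ a (c a)) : BSVertex G))
      ({v | PA v} \ {a₀}) := by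
    intro a ha b hb h
    exact E_inj hcb ha₀ hc1 ha.1 (by simpa using ha.2) hb.1 (by simpa using hb.2)
      (Sum.inr.inj h)
  have himg := Set.ncard_image_of_injOn hinj
  have hnotmem : (Sum.inl a₀ : BSVertex G) ∉
      ((fun a => (Sum.inr (mkE G e₀ a (c a)) : BSVertex G)) '' ({v | PA v} \ {a₀})) := by
    rintro ⟨a, -, h⟩
    exact Sum.inr_ne_inl h
  have hpos : 0 < {v | PA v}.ncard := (Set.ncard_pos (Set.toFinite _)).2 ⟨a₀, ha₀⟩
  have hd : ({v | PA v} \ {a₀}).ncard = {v | PA v}.ncard - 1 :=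
    Set.ncard_diff_singleton_of_mem ha₀
  have h1 := Set.ncard_insert_of_notMem hnotmem (Set.toFinite _)
  rw [himg, hd] at h1
  exact h1.trans (by omega)

end Assemble

theorem abstract_main [Finite V] {PA : V → Prop} (hcb : CBhyp G PA)
    (h2B : 2 ≤ {v | ¬ PA v}.ncard)
    (hAB : 2 * {v | ¬ PA v}.ncard + 1 ≤ {v | PA v}.ncard) :
    ftMetricDim (BS G) = {v | PA v}.ncard := by
  classical
  have ha : ∃ a, PA a := Set.nonempty_of_ncard_ne_zero (s := {v | PA v}) (by omega)
  have hb : ∃ b, ¬ PA b := Set.nonempty_of_ncard_ne_zero (s := {v | ¬ PA v}) (by omega)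
  obtain ⟨a₀, ha₀⟩ := ha
  have hdiff_card : ({v | PA v} \ {a₀}).ncard = {v | PA v}.ncard - 1 :=
    Set.ncard_diff_singleton_of_mem ha₀
  have hApos : 0 < {v | PA v}.ncard := (Set.ncard_pos (Set.toFinite _)).2 ⟨a₀, ha₀⟩
  obtain ⟨b₀, hb₀⟩ := hb
  obtain ⟨c, hcT, hctwo⟩ := exists_double_cover (Set.toFinite {v | ¬ PA v})
    ({v | PA v} \ {a₀}) (Set.toFinite _) (by rw [hdiff_card]; omega) ⟨b₀, hb₀⟩
  have hc1 : ∀ a, PA a → a ≠ a₀ → ¬ PA (c a) := by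
    intro a hPa hne
    have := hcT a ⟨hPa, by simpa using hne⟩
    exact this
  have hc2 : ∀ b, ¬ PA b → ∃ a₁ a₂, (PA a₁ ∧ a₁ ≠ a₀) ∧ (PA a₂ ∧ a₂ ≠ a₀) ∧
      a₁ ≠ a₂ ∧ c a₁ = b ∧ c a₂ = b := by
    intro b hbP
    obtain ⟨x, hx, y, hy, hxy, hcx, hcy⟩ := hctwo b hbP
    exact ⟨x, y, ⟨hx.1, by simpa using hx.2⟩, ⟨hy.1, by simpa using hy.2⟩, hxy, hcx, hcy⟩
  have e₀ : G.edgeSet := ⟨s(a₀, b₀), adj_of_PA hcb ha₀ hb₀⟩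
  have hmem : {v | PA v}.ncard ∈
      {k : ℕ | ∃ W : Set (BSVertex G), IsFTResolving (BS G) W ∧ W.ncard = k} :=
    ⟨WSet G PA a₀ c e₀, WSet_FT hcb ha₀ hc1 hc2 ⟨a₀, ha₀⟩ ⟨b₀, hb₀⟩,
      WSet_ncard hcb ha₀ hc1⟩
  have hsne : {k : ℕ | ∃ W : Set (BSVertex G),
      IsFTResolving (BS G) W ∧ W.ncard = k}.Nonempty := ⟨_, hmem⟩
  apply le_antisymm
  · exact Nat.sInf_le hmem
  · obtain ⟨W, hW, hcard⟩ := Nat.sInf_mem hsne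
    calc {v | PA v}.ncard ≤ W.ncard :=
          FT_lower hcb ⟨a₀, ha₀⟩ ⟨b₀, hb₀⟩ (by omega) hW
      _ = _ := hcard


namespace ZDapp

noncomputable def phi {p q : ℕ} (hp : p.Prime) (hq : q.Prime) (hne : p ≠ q) :
    ZMod (p * q) ≃+* ZMod p × ZMod q :=
  ZMod.chineseRemainder ((Nat.coprime_primes hp hq).2 hne)

variable {p q : ℕ}

lemma p_ne_zero_q (hp : p.Prime) (hq : q.Prime) (hne : p ≠ q) : (p : ZMod q) ≠ 0 := by
  rw [Ne, ZMod.natCast_eq_zero_iff]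
  intro hdvd
  exact hne ((Nat.prime_dvd_prime_iff_eq hq hp).1 hdvd).symm

lemma phi_p (hp : p.Prime) (hq : q.Prime) (hne : p ≠ q) :
    (phi hp hq hne) (p : ZMod (p * q)) = (0, (p : ZMod q)) := by
  have h1 : ((phi hp hq hne : ZMod (p * q) →+* ZMod p × ZMod q)) (p : ZMod (p * q)) =
      ((p : ZMod p × ZMod q)) := map_natCast _ p
  simp only [RingEquiv.coe_toRingHom] at h1
  rw [h1]
  refine Prod.ext ?_ ?_
  · simp
  · simp

lemma mult_p_iff (hp : p.Prime) (hq : q.Prime) (hne : p ≠ q) (x : ZMod (p * q)) :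
    (∃ k, x = (p : ZMod (p * q)) * k) ↔ ((phi hp hq hne) x).1 = 0 := by
  haveI : Fact q.Prime := ⟨hq⟩
  constructor
  · rintro ⟨k, rfl⟩
    rw [map_mul, phi_p hp hq hne]
    simp
  · intro h
    set φ := phi hp hq hne with hφ
    set t := (φ x).2 with ht
    refine ⟨φ.symm (0, t * (p : ZMod q)⁻¹), ?_⟩
    apply φ.injective
    rw [map_mul, RingEquiv.apply_symm_apply, hφ, phi_p hp hq hne]
    have hkey : (p : ZMod q) * (t * (p : ZMod q)⁻¹) = t := by
      rw [mul_comm t _, ← mul_assoc, mul_inv_cancel₀ (p_ne_zero_q hp hq hne), one_mul]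
    refine Prod.ext ?_ ?_
    · simp [← hφ, h]
    · simp [← hφ, ← ht, hkey]

end ZDapp

namespace ZDapp

variable {p q : ℕ}

lemma symm_ne_zero (hp : p.Prime) (hq : q.Prime) (hne : p ≠ q) {z : ZMod p × ZMod q}
    (hz : z ≠ 0) : (phi hp hq hne).symm z ≠ 0 := by
  intro h
  apply hz
  have := congrArg (phi hp hq hne) h
  rwa [RingEquiv.apply_symm_apply, map_zero] at this

lemma vert_coord (hp : p.Prime) (hq : q.Prime) (hne : p ≠ q) (v : ZDVertex (p * q)) :
    (((phi hp hq hne) v.1).1 = 0 ∧ ((phi hp hq hne) v.1).2 ≠ 0) ∨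
    (((phi hp hq hne) v.1).1 ≠ 0 ∧ ((phi hp hq hne) v.1).2 = 0) := by
  haveI : Fact p.Prime := ⟨hp⟩
  haveI : Fact q.Prime := ⟨hq⟩
  obtain ⟨hv0, y, hy0, hxy⟩ := v.2
  set φ := phi hp hq hne with hφ
  by_cases h1 : (φ v.1).1 = 0
  · left
    refine ⟨h1, ?_⟩
    intro h2
    apply hv0
    have : φ v.1 = 0 := Prod.ext h1 h2
    have := congrArg φ.symm this
    rwa [RingEquiv.symm_apply_apply, map_zero] at this
  · right
    refine ⟨h1, ?_⟩
    by_contra h2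
    have hu : IsUnit (φ v.1) := by
      refine ⟨⟨φ v.1, ((φ v.1).1⁻¹, (φ v.1).2⁻¹), ?_, ?_⟩, rfl⟩
      · exact Prod.ext (mul_inv_cancel₀ h1) (mul_inv_cancel₀ h2)
      · exact Prod.ext (inv_mul_cancel₀ h1) (inv_mul_cancel₀ h2)
    have hux : IsUnit v.1 := by
      have := hu.map (φ.symm : ZMod p × ZMod q →+* ZMod (p * q))
      rwa [RingEquiv.coe_toRingHom, RingEquiv.symm_apply_apply] at this
    exact hy0 ((IsUnit.mul_right_eq_zero hux).1 hxy)

lemma PA_coord (hp : p.Prime) (hq : q.Prime) (hne : p ≠ q) (v : ZDVertex (p * q)) :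
    (∃ k, v.1 = (p : ZMod (p * q)) * k) ↔ ((phi hp hq hne) v.1).1 = 0 :=
  mult_p_iff hp hq hne v.1

lemma CB (hp : p.Prime) (hq : q.Prime) (hne : p ≠ q) :
    CBhyp (zdGraph (p * q)) (fun v => ∃ k, v.1 = (p : ZMod (p * q)) * k) := by
  haveI : Fact p.Prime := ⟨hp⟩
  haveI : Fact q.Prime := ⟨hq⟩
  set φ := phi hp hq hne with hφ
  intro u v
  constructor
  · rintro ⟨huv, hprod⟩
    have hphi : φ u.1 * φ v.1 = 0 := by
      have h0 := congrArg φ hprod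
      rwa [map_mul, map_zero] at h0
    have h1 : (φ u.1).1 * (φ v.1).1 = 0 := by
      have := congrArg Prod.fst hphi; simpa using this
    have h2 : (φ u.1).2 * (φ v.1).2 = 0 := by
      have := congrArg Prod.snd hphi; simpa using this
    rcases vert_coord hp hq hne u with ⟨hu1, hu2⟩ | ⟨hu1, hu2⟩ <;>
      rcases vert_coord hp hq hne v with ⟨hv1, hv2⟩ | ⟨hv1, hv2⟩
    · exact absurd (mul_eq_zero.1 h2) (by push_neg; exact ⟨hu2, hv2⟩)
    · exact Or.inl ⟨(PA_coord hp hq hne u).2 hu1,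
        fun hc => hv1 ((PA_coord hp hq hne v).1 hc)⟩
    · exact Or.inr ⟨fun hc => hu1 ((PA_coord hp hq hne u).1 hc),
        (PA_coord hp hq hne v).2 hv1⟩
    · exact absurd (mul_eq_zero.1 h1) (by push_neg; exact ⟨hu1, hv1⟩)
  · intro h
    have key : ∀ a b : ZDVertex (p * q),
        (∃ k, a.1 = (p : ZMod (p * q)) * k) → ¬ (∃ k, b.1 = (p : ZMod (p * q)) * k) →
        a ≠ b ∧ a.1 * b.1 = 0 := by
      intro a b hPa hPb
      have ha1 : (φ a.1).1 = 0 := (PA_coord hp hq hne a).1 hPa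
      have hb2 : (φ b.1).2 = 0 := by
        rcases vert_coord hp hq hne b with ⟨hb1, -⟩ | ⟨-, hb2⟩
        · exact absurd ((PA_coord hp hq hne b).2 hb1) hPb
        · exact hb2
      refine ⟨fun hc => hPb (hc ▸ hPa), ?_⟩
      apply φ.injective
      rw [map_mul, map_zero]
      refine Prod.ext ?_ ?_
      · show (φ a.1).1 * (φ b.1).1 = 0
        rw [ha1, zero_mul]
      · show (φ a.1).2 * (φ b.1).2 = 0
        rw [hb2, mul_zero]
    rcases h with ⟨hPu, hPv⟩ | ⟨hPu, hPv⟩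
    · exact key u v hPu hPv
    · obtain ⟨hne', hprod⟩ := key v u hPv hPu
      exact ⟨hne'.symm, by rw [mul_comm (u.1 : ZMod (p * q)) v.1]; exact hprod⟩

end ZDapp

namespace ZDapp

variable {p q : ℕ}

lemma card_ne_zero_subtype (m : ℕ) (hm : m.Prime) :
    Nat.card {b : ZMod m // b ≠ 0} = m - 1 := by
  haveI : NeZero m := ⟨hm.pos.ne'⟩
  rw [Nat.card_eq_fintype_card]
  have h1 : Fintype.card {b : ZMod m // b ≠ 0} =
      Fintype.card (ZMod m) - Fintype.card {b : ZMod m // b = 0} :=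
    Fintype.card_subtype_compl _
  rw [h1, ZMod.card, Fintype.card_subtype_eq (0 : ZMod m)]

noncomputable def AEquiv (hp : p.Prime) (hq : q.Prime) (hne : p ≠ q) :
    {v : ZDVertex (p * q) | ∃ k, v.1 = (p : ZMod (p * q)) * k} ≃ {b : ZMod q // b ≠ 0} where
  toFun := fun x => ⟨((phi hp hq hne) x.1.1).2, by
    rcases vert_coord hp hq hne x.1 with ⟨-, h2⟩ | ⟨h1, -⟩
    · exact h2
    · exact absurd ((PA_coord hp hq hne x.1).1 x.2) h1⟩
  invFun := fun b => ⟨⟨(phi hp hq hne).symm (0, b.1), by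
      constructor
      · apply symm_ne_zero hp hq hne
        intro hc
        exact b.2 (congrArg Prod.snd hc)
      · refine ⟨(phi hp hq hne).symm (1, 0), ?_, ?_⟩
        · apply symm_ne_zero hp hq hne
          intro hc
          haveI : Fact (1 < p) := ⟨hp.one_lt⟩
          exact one_ne_zero (congrArg Prod.fst hc)
        · apply (phi hp hq hne).injective
          rw [map_mul, RingEquiv.apply_symm_apply, RingEquiv.apply_symm_apply, map_zero]
          exact Prod.ext (by simp) (by simp)⟩,
    by
      apply (PA_coord hp hq hne _).2
      show ((phi hp hq hne) ((phi hp hq hne).symm (0, b.1))).1 = 0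
      rw [RingEquiv.apply_symm_apply]⟩
  left_inv := by
    rintro ⟨v, hv⟩
    apply Subtype.ext
    apply Subtype.ext
    show (phi hp hq hne).symm (0, ((phi hp hq hne) v.1).2) = v.1
    apply (phi hp hq hne).injective
    rw [RingEquiv.apply_symm_apply]
    exact Prod.ext ((PA_coord hp hq hne v).1 hv).symm rfl
  right_inv := by
    rintro ⟨b, hb⟩
    apply Subtype.ext
    show ((phi hp hq hne) ((phi hp hq hne).symm (0, b))).2 = b
    rw [RingEquiv.apply_symm_apply]

lemma A_card (hp : p.Prime) (hq : q.Prime) (hne : p ≠ q) :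
    {v : ZDVertex (p * q) | ∃ k, v.1 = (p : ZMod (p * q)) * k}.ncard = q - 1 := by
  rw [← Nat.card_coe_set_eq, Nat.card_congr (AEquiv hp hq hne),
    card_ne_zero_subtype q hq]

noncomputable def BEquiv (hp : p.Prime) (hq : q.Prime) (hne : p ≠ q) :
    {v : ZDVertex (p * q) | ¬ ∃ k, v.1 = (p : ZMod (p * q)) * k} ≃ {a : ZMod p // a ≠ 0} where
  toFun := fun x => ⟨((phi hp hq hne) x.1.1).1, by
    intro hc
    exact x.2 ((PA_coord hp hq hne x.1).2 hc)⟩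
  invFun := fun a => ⟨⟨(phi hp hq hne).symm (a.1, 0), by
      constructor
      · apply symm_ne_zero hp hq hne
        intro hc
        exact a.2 (congrArg Prod.fst hc)
      · refine ⟨(phi hp hq hne).symm (0, 1), ?_, ?_⟩
        · apply symm_ne_zero hp hq hne
          intro hc
          haveI : Fact (1 < q) := ⟨hq.one_lt⟩
          exact one_ne_zero (congrArg Prod.snd hc)
        · apply (phi hp hq hne).injective
          rw [map_mul, RingEquiv.apply_symm_apply, RingEquiv.apply_symm_apply, map_zero]
          exact Prod.ext (by simp) (by simp)⟩,
    by
      intro hc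
      have h1 := (PA_coord hp hq hne _).1 hc
      rw [show ((phi hp hq hne) ((phi hp hq hne).symm (a.1, 0))) = (a.1, 0) from
        RingEquiv.apply_symm_apply _ _] at h1
      exact a.2 h1⟩
  left_inv := by
    rintro ⟨v, hv⟩
    apply Subtype.ext
    apply Subtype.ext
    show (phi hp hq hne).symm (((phi hp hq hne) v.1).1, 0) = v.1
    apply (phi hp hq hne).injective
    rw [RingEquiv.apply_symm_apply]
    have h2 : ((phi hp hq hne) v.1).2 = 0 := by
      rcases vert_coord hp hq hne v with ⟨h1, -⟩ | ⟨-, h2⟩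
      · exact absurd ((PA_coord hp hq hne v).2 h1) hv
      · exact h2
    exact Prod.ext rfl h2.symm
  right_inv := by
    rintro ⟨a, ha⟩
    apply Subtype.ext
    show ((phi hp hq hne) ((phi hp hq hne).symm (a, 0))).1 = a
    rw [RingEquiv.apply_symm_apply]

lemma B_card (hp : p.Prime) (hq : q.Prime) (hne : p ≠ q) :
    {v : ZDVertex (p * q) | ¬ ∃ k, v.1 = (p : ZMod (p * q)) * k}.ncard = p - 1 := by
  rw [← Nat.card_coe_set_eq, Nat.card_congr (BEquiv hp hq hne),
    card_ne_zero_subtype p hp]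

end ZDapp

theorem ftMetricDim_BS_zdGraph_eq_q_sub_one (p q : ℕ) (hp : p.Prime) (hq : q.Prime)
    (hpodd : Odd p) (hqodd : Odd q) (hne : p ≠ q) (hpq : q > p) (h : q > 2 * p - 1) :
    ftMetricDim (BS (zdGraph (p * q))) = q - 1 := by
  haveI : NeZero (p * q) := ⟨Nat.mul_ne_zero hp.pos.ne' hq.pos.ne'⟩
  haveI : Finite (ZDVertex (p * q)) :=
    (inferInstance : Finite {x : ZMod (p * q) // x ≠ 0 ∧ ∃ y : ZMod (p * q), y ≠ 0 ∧ x * y = 0})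
  have hp3 : 3 ≤ p := by
    have h2 := hp.two_le
    have hodd := Nat.odd_iff.1 hpodd
    omega
  have hq2p : 2 * p ≤ q := by omega
  have hA := ZDapp.A_card hp hq hne
  have hB := ZDapp.B_card hp hq hne
  have := abstract_main (ZDapp.CB hp hq hne) (by rw [hB]; omega)
    (by rw [hA, hB]; omega)
  rw [this, hA]
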